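/- Let G be a stratified Lie group with dyadic cube system D = ∪_k D_k, where each R ∈ D_k satisfies B(c_R, γ₁2^{−k}) ⊆ R ⊆ B(c_R, γ₂2^{−k}). Suppose the kernel K satisfies the non-degenerate ball condition: for each ball B(x₀,r) there exists a ball B(y₀,r) with A₃r ≤ ρ(x₀⁻¹y₀) ≤ A₄r, where A₄ ≥ A₃ ≥ 2A₀, on which K has constant sign and |K(x,y)| ≳ r^{−Q} for (x,y) ∈ B(x₀,r)×B(y₀,r). Then there exist constants A₄' ≥ A₃' ≥ 2A₀ such that for every cube R ∈ D_k there is a cube R̃ ∈ D_k with A₃'2^{−k} ≤ ρ(c_R⁻¹c_{R̃}) ≤ A₄'2^{−k}, K(x,y) does not change sign on R × R̃, and |K(x,y)| ≳ |R|^{−1} for all (x,y) ∈ R × R̃. -/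

import Mathlib

open MeasureTheory

/-- Lemma 2.1 of the paper: the non-degenerate condition on balls transfers to the dyadic
cube system. For each cube R ∈ D_k there is a cube R̃ ∈ D_k with
A₃'2^{−k} ≤ ρ(c_R⁻¹ c_{R̃}) ≤ A₄'2^{−k}, on which K does not change sign and
|K(x,y)| ≳ |R|⁻¹ for all (x,y) ∈ R × R̃. -/
theorem stmt13 {G : Type*} [Group G] [MeasurableSpace G] (μ : Measure G)
    (ρ : G → ℝ) (K : G → G → ℝ) (A₀ γ₁ γ₂ Qd c₁ c₂ A₃ A₄ cK : ℝ)
    (D : ℤ → Set (Set G)) (center : Set G → G)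
    (hA₀ : 1 ≤ A₀) (hγ₁ : 0 < γ₁) (hγ : γ₁ ≤ γ₂) (hQd : 0 < Qd)
    (hc₁ : 0 < c₁) (hc₂ : c₁ ≤ c₂)
    (hquasi : ∀ x y : G, ρ (x * y) ≤ A₀ * (ρ x + ρ y))
    (hsym : ∀ x : G, ρ x⁻¹ = ρ x) (hnn : ∀ x : G, 0 ≤ ρ x)
    -- each cube R ∈ D_k satisfies B(c_R, γ₁2^{−k}) ⊆ R ⊆ B(c_R, γ₂2^{−k})
    (hcube : ∀ k : ℤ, ∀ R ∈ D k,
      {y : G | ρ (y⁻¹ * center R) < γ₁ * (2 : ℝ) ^ (-k)} ⊆ R ∧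
      R ⊆ {y : G | ρ (y⁻¹ * center R) < γ₂ * (2 : ℝ) ^ (-k)})
    -- every point is within γ₂2^{−k} of the center of some cube of D_k
    (hcover : ∀ (k : ℤ) (x : G), ∃ R ∈ D k, ρ (x⁻¹ * center R) ≤ γ₂ * (2 : ℝ) ^ (-k))
    -- |R| ≃ 2^{−kQ}
    (hvol₁ : ∀ k : ℤ, ∀ R ∈ D k,
      ENNReal.ofReal (c₁ * (2 : ℝ) ^ (-(k : ℝ) * Qd)) ≤ μ R)
    (hvol₂ : ∀ k : ℤ, ∀ R ∈ D k,
      μ R ≤ ENNReal.ofReal (c₂ * (2 : ℝ) ^ (-(k : ℝ) * Qd)))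
    -- the non-degenerate condition for balls
    (h₃₄ : 2 * A₀ ≤ A₃) (hA₃₄ : A₃ ≤ A₄) (hcK : 0 < cK)
    (hnondeg : ∀ (x₀ : G) (r : ℝ), 0 < r → ∃ y₀ : G,
      A₃ * r ≤ ρ (x₀⁻¹ * y₀) ∧ ρ (x₀⁻¹ * y₀) ≤ A₄ * r ∧
      ((∀ x, ρ (x⁻¹ * x₀) < r → ∀ y, ρ (y⁻¹ * y₀) < r → 0 ≤ K x y) ∨
       (∀ x, ρ (x⁻¹ * x₀) < r → ∀ y, ρ (y⁻¹ * y₀) < r → K x y ≤ 0)) ∧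
      (∀ x, ρ (x⁻¹ * x₀) < r → ∀ y, ρ (y⁻¹ * y₀) < r → cK / r ^ Qd ≤ |K x y|)) :
    ∃ A₃' A₄' c' : ℝ, 2 * A₀ ≤ A₃' ∧ A₃' ≤ A₄' ∧ 0 < c' ∧
      ∀ k : ℤ, ∀ R ∈ D k, ∃ Rt ∈ D k,
        A₃' * (2 : ℝ) ^ (-k) ≤ ρ ((center R)⁻¹ * center Rt) ∧
        ρ ((center R)⁻¹ * center Rt) ≤ A₄' * (2 : ℝ) ^ (-k) ∧
        ((∀ x ∈ R, ∀ y ∈ Rt, 0 ≤ K x y) ∨ (∀ x ∈ R, ∀ y ∈ Rt, K x y ≤ 0)) ∧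
        (∀ x ∈ R, ∀ y ∈ Rt, ENNReal.ofReal c' ≤ ENNReal.ofReal |K x y| * μ R) := by
  have hγ₂ : 0 < γ₂ := hγ₁.trans_le hγ
  have hA₀' : 0 < A₀ := by linarith
  set M : ℝ := 2 * A₀ * (γ₂ + 1) with hMdef
  have hM : 0 < M := by positivity
  have hMQ : 0 < M ^ Qd := Real.rpow_pos_of_pos hM Qd
  refine ⟨2 * M - γ₂, A₀ * (A₄ * M + γ₂), cK * c₁ / M ^ Qd, by nlinarith, ?_,
    by positivity, ?_⟩
  · have h2A : (2:ℝ) ≤ A₀ * A₄ := by nlinarith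
    have := mul_le_mul_of_nonneg_right h2A hM.le
    nlinarith
  intro k R hR
  set s : ℝ := (2 : ℝ) ^ (-k) with hsdef
  have hs : 0 < s := by positivity
  have hr : 0 < M * s := mul_pos hM hs
  obtain ⟨y₀, hlow, hhigh, hsign, hsize⟩ := hnondeg (center R) (M * s) hr
  obtain ⟨Rt, hRt, hRtc⟩ := hcover k y₀
  have hcy : ρ ((center Rt)⁻¹ * y₀) ≤ γ₂ * s := by
    rw [← hsym, mul_inv_rev, inv_inv]; exact hRtc
  -- every x ∈ R is within r of center R
  have hxR : ∀ x ∈ R, ρ (x⁻¹ * center R) < M * s := by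
    intro x hx
    have h1 : ρ (x⁻¹ * center R) < γ₂ * s := (hcube k R hR).2 hx
    have : γ₂ * s ≤ M * s := by nlinarith
    linarith
  -- every y ∈ Rt is within r of y₀
  have hyRt : ∀ y ∈ Rt, ρ (y⁻¹ * y₀) < M * s := by
    intro y hy
    have h1 : ρ (y⁻¹ * center Rt) < γ₂ * s := (hcube k Rt hRt).2 hy
    have h2 := hquasi (y⁻¹ * center Rt) ((center Rt)⁻¹ * y₀)
    have h3 : (y⁻¹ * center Rt) * ((center Rt)⁻¹ * y₀) = y⁻¹ * y₀ := by group
    rw [h3] at h2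
    nlinarith
  refine ⟨Rt, hRt, ?_, ?_, ?_, ?_⟩
  · -- lower bound on distance of centers
    have h2 := hquasi ((center R)⁻¹ * center Rt) ((center Rt)⁻¹ * y₀)
    have h3 : ((center R)⁻¹ * center Rt) * ((center Rt)⁻¹ * y₀) = (center R)⁻¹ * y₀ := by group
    rw [h3] at h2
    have h4 : 2 * A₀ * (M * s) ≤ ρ ((center R)⁻¹ * y₀) := by nlinarith
    have h5 : A₀ * ((2 * M - γ₂) * s) ≤ A₀ * ρ ((center R)⁻¹ * center Rt) := by nlinarith
    exact le_of_mul_le_mul_left h5 hA₀'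
  · -- upper bound on distance of centers
    have h2 := hquasi ((center R)⁻¹ * y₀) (y₀⁻¹ * center Rt)
    have h3 : ((center R)⁻¹ * y₀) * (y₀⁻¹ * center Rt) = (center R)⁻¹ * center Rt := by group
    rw [h3] at h2
    nlinarith
  · -- sign condition
    rcases hsign with h | h
    · exact Or.inl fun x hx y hy => h x (hxR x hx) y (hyRt y hy)
    · exact Or.inr fun x hx y hy => h x (hxR x hx) y (hyRt y hy)
  · -- size condition
    intro x hx y hy
    have hK : cK / (M * s) ^ Qd ≤ |K x y| := hsize x (hxR x hx) y (hyRt y hy)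
    have hs2 : (2 : ℝ) ^ (-(k : ℝ) * Qd) = s ^ Qd := by
      rw [Real.rpow_mul (by norm_num : (0:ℝ) ≤ 2)]
      congr 1
      rw [hsdef, ← Real.rpow_intCast 2 (-k)]
      push_cast
      ring_nf
    have hvol := hvol₁ k R hR
    rw [hs2] at hvol
    have hsQ : 0 < s ^ Qd := Real.rpow_pos_of_pos hs Qd
    have hkey : cK * c₁ / M ^ Qd = (cK / (M * s) ^ Qd) * (c₁ * s ^ Qd) := by
      rw [Real.mul_rpow hM.le hs.le]
      field_simp
    calc ENNReal.ofReal (cK * c₁ / M ^ Qd)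
        = ENNReal.ofReal (cK / (M * s) ^ Qd) * ENNReal.ofReal (c₁ * s ^ Qd) := by
          rw [hkey, ENNReal.ofReal_mul (by positivity)]
      _ ≤ ENNReal.ofReal |K x y| * μ R :=
          mul_le_mul' (ENNReal.ofReal_le_ofReal hK) hvol
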